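/- The kernel of the adjoint T* of T_{α,β} is one-dimensional: ker T*_{α,β} = ℂ·(e_0 − (conj(α)·β/conj(β))·e_1). -/

import Mathlib

open scoped ComplexConjugate

noncomputable section

/-- The Hilbert space `H = ℓ²(ℕ, ℂ)`. -/
abbrev H : Type := lp (fun _ : ℕ => ℂ) 2

/-- The standard orthonormal basis vectors of `ℓ²(ℕ, ℂ)`. -/
noncomputable def e (n : ℕ) : H := lp.single 2 n (1 : ℂ)

local notation "⟪" x ", " y "⟫" => @inner ℂ _ _ x y

lemma inner_e_left (n : ℕ) (f : H) : ⟪e n, f⟫ = f n := by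
  simp [e, lp.inner_single_left, RCLike.inner_apply]

/-- The kernel of the adjoint of `T = T_{α,β}` is spanned by
`e 0 - (conj α * β / conj β) • e 1`. -/
theorem kernel_adjoint_T (α β : ℂ) (hα : α ≠ 0) (hβ : β ≠ 0)
    (hnorm : ‖α‖ ^ 2 + ‖β‖ ^ 2 = 1)
    (T : H →L[ℂ] H)
    (hT0 : T (e 0) = (α * conj β) • e 0 + β • e 1)
    (hTn : ∀ n : ℕ, 1 ≤ n → T (e n) = e (n + 1)) :
    LinearMap.ker (ContinuousLinearMap.adjoint T : H →ₗ[ℂ] H) =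
      Submodule.span ℂ {e 0 - (conj α * β / conj β) • e 1} := by
  have hβ' : conj β ≠ 0 := by simpa using hβ
  set c : ℂ := conj α * β / conj β with hc
  set v : H := e 0 - c • e 1 with hv
  -- coordinates of v
  have hv0 : (v : ∀ _ : ℕ, ℂ) 0 = 1 := by
    rw [hv, lp.coeFn_sub, lp.coeFn_smul]
    simp [e, lp.single_apply]
  have hv1 : (v : ∀ _ : ℕ, ℂ) 1 = -c := by
    rw [hv, lp.coeFn_sub, lp.coeFn_smul]
    simp [e, lp.single_apply]
  have hvn : ∀ n : ℕ, 2 ≤ n → (v : ∀ _ : ℕ, ℂ) n = 0 := by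
    intro n hn
    have h0 : n ≠ 0 := by omega
    have h1 : n ≠ 1 := by omega
    rw [hv, lp.coeFn_sub, lp.coeFn_smul]
    simp [e, lp.single_apply, h0, h1, Ne.symm h0, Ne.symm h1]
  -- key: for any x, (adjoint T x) n = ⟪T (e n), x⟫
  have key : ∀ (x : H) (n : ℕ),
      ((ContinuousLinearMap.adjoint T) x : ∀ _ : ℕ, ℂ) n = ⟪T (e n), x⟫ := by
    intro x n
    rw [← inner_e_left n ((ContinuousLinearMap.adjoint T) x),
      ContinuousLinearMap.adjoint_inner_right]
  -- inner products with v and with general x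
  have hTe0 : ∀ x : H, ⟪T (e 0), x⟫ =
      conj α * β * (x : ∀ _ : ℕ, ℂ) 0 + conj β * (x : ∀ _ : ℕ, ℂ) 1 := by
    intro x
    rw [hT0, inner_add_left, inner_smul_left, inner_smul_left, inner_e_left,
      inner_e_left]
    simp only [map_mul, Complex.conj_conj]
    try ring
  have hTen : ∀ (n : ℕ) (x : H), 1 ≤ n →
      ⟪T (e n), x⟫ = (x : ∀ _ : ℕ, ℂ) (n + 1) := by
    intro n x hn
    rw [hTn n hn, inner_e_left]
  ext x
  simp only [LinearMap.mem_ker, Submodule.mem_span_singleton]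
  constructor
  · intro hx
    have hz : ∀ n : ℕ, ⟪T (e n), x⟫ = 0 := by
      intro n
      have := key x n
      rw [show (ContinuousLinearMap.adjoint T) x = 0 from hx] at this
      simpa using this.symm
    refine ⟨(x : ∀ _ : ℕ, ℂ) 0, ?_⟩
    apply lp.ext
    funext n
    have hsmul : (((x : ∀ _ : ℕ, ℂ) 0 • v : H) : ∀ _ : ℕ, ℂ) n
        = (x : ∀ _ : ℕ, ℂ) 0 * (v : ∀ _ : ℕ, ℂ) n := by
      simp [lp.coeFn_smul, Pi.smul_apply, smul_eq_mul]
    rw [hsmul]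
    match n with
    | 0 => rw [hv0]; ring
    | 1 =>
      rw [hv1]
      have h0 := hz 0
      rw [hTe0 x] at h0
      rw [hc]
      field_simp
      linear_combination -h0
    | (m + 2) =>
      have h1 := hz (m + 1)
      rw [hTen (m + 1) x (by omega)] at h1
      rw [hvn (m + 2) (by omega), h1]
      ring
  · rintro ⟨a, rfl⟩
    have hv' : (ContinuousLinearMap.adjoint T) v = 0 := by
      apply lp.ext
      funext n
      rw [key v n, lp.coeFn_zero, Pi.zero_apply]
      match n with
      | 0 =>
        rw [hTe0 v, hv0, hv1, hc]
        field_simp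
        ring
      | (m + 1) =>
        rw [hTen (m + 1) v (by omega), hvn (m + 2) (by omega)]
    rw [map_smul, show (ContinuousLinearMap.adjoint T : H →ₗ[ℂ] H) v = 0 from hv', smul_zero]

end
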